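/- Let A be a unital C*-algebra, 0 < q < 1, and z₁,…,zₙ ∈ A self-adjoint-free generators satisfying the relations of Theorem 3.1 (zᵢzⱼ = q^{1/2}zⱼzᵢ, zᵢzⱼ* = q^{−1/2}zⱼ*zᵢ for i < j, and zᵢ*zᵢ − q zᵢzᵢ* = (1−q)(1 − Σ_{j>i} zⱼzⱼ*)). Then the element r = 1 − Σ_{j=1}^n zⱼzⱼ* satisfies r^{1/2} zᵢ = q^{1/2} zᵢ r^{1/2} for all i = 1,…,n. (It suffices to prove r zᵢ = q zᵢ r, since r ≥ 0 and the square root is a norm-limit of polynomials in r.) -/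

import Mathlib

open scoped Polynomial
lemma aeval_intertwine {A : Type*} [Ring A] [Algebra ℝ A] {a b w : A}
    (hab : a * w = w * b) (p : ℝ[X]) :
    Polynomial.aeval a p * w = w * Polynomial.aeval b p := by
  have hpow : ∀ k : ℕ, a ^ k * w = w * b ^ k := by
    intro k
    induction k with
    | zero => simp
    | succ k ih =>
      rw [pow_succ, pow_succ, mul_assoc, hab, ← mul_assoc, ih, mul_assoc]
  induction p using Polynomial.induction_on' with
  | add p q hp hq => simp [map_add, add_mul, mul_add, hp, hq]
  | monomial k c =>
    simp only [Polynomial.aeval_monomial]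
    rw [mul_assoc, hpow k, ← mul_assoc, Algebra.commutes c w, mul_assoc]

lemma cfc_intertwine {A : Type*} [CStarAlgebra A] {a b w : A}
    (ha : IsSelfAdjoint a) (hb : IsSelfAdjoint b) (hab : a * w = w * b)
    {f : ℝ → ℝ} (hf : Continuous f) :
    cfc f a * w = w * cfc f b := by
  set s : Set ℝ := spectrum ℝ a ∪ spectrum ℝ b with hs
  have hsa : spectrum ℝ a ⊆ s := Set.subset_union_left
  have hsb : spectrum ℝ b ⊆ s := Set.subset_union_right
  have hcs : IsCompact s := (spectrum.isCompact a).union (spectrum.isCompact b)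
  have : CompactSpace s := isCompact_iff_compactSpace.mp hcs
  let ιa : C(spectrum ℝ a, s) := ⟨Set.inclusion hsa, continuous_inclusion hsa⟩
  let ιb : C(spectrum ℝ b, s) := ⟨Set.inclusion hsb, continuous_inclusion hsb⟩
  let L : C(s, ℝ) → A := fun g => cfcHom ha (g.comp ιa) * w
  let R : C(s, ℝ) → A := fun g => w * cfcHom hb (g.comp ιb)
  have hL : Continuous L :=
    ((cfcHom_isClosedEmbedding ha).continuous.comp (ContinuousMap.continuous_precomp ιa)).mul
      continuous_const
  have hR : Continuous R :=
    continuous_const.mul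
      ((cfcHom_isClosedEmbedding hb).continuous.comp (ContinuousMap.continuous_precomp ιb))
  have hcfcHom_poly : ∀ (c : A) (hc : IsSelfAdjoint c) (p : ℝ[X]),
      cfcHom hc (p.toContinuousMapOn (spectrum ℝ c)) = Polynomial.aeval c p := by
    intro c hc p
    have h1 := cfc_apply (R := ℝ) p.eval c hc p.continuous.continuousOn
    rw [cfc_polynomial p c hc] at h1
    rw [h1]
    congr 1
  have hpoly : Set.EqOn L R (polynomialFunctions s : Set C(s, ℝ)) := by
    intro g hg
    rw [polynomialFunctions_coe] at hg
    obtain ⟨p, hp⟩ := hg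
    have hga : g.comp ιa = p.toContinuousMapOn (spectrum ℝ a) := by
      ext x
      simp [← hp, ιa, Polynomial.toContinuousMapOn, Polynomial.toContinuousMap]
    have hgb : g.comp ιb = p.toContinuousMapOn (spectrum ℝ b) := by
      ext x
      simp [← hp, ιb, Polynomial.toContinuousMapOn, Polynomial.toContinuousMap]
    show L g = R g
    simp only [L, R, hga, hgb, hcfcHom_poly a ha p, hcfcHom_poly b hb p]
    exact aeval_intertwine hab p
  have hclosure : Set.EqOn L R (closure (polynomialFunctions s : Set C(s, ℝ))) :=
    Set.EqOn.closure hpoly hL hR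
  have huniv : (closure (polynomialFunctions s : Set C(s, ℝ))) = Set.univ := by
    have h := polynomialFunctions.topologicalClosure s
    have := congrArg (fun t : Subalgebra ℝ C(s, ℝ) => (t : Set C(s, ℝ))) h
    simpa [Subalgebra.topologicalClosure_coe] using this
  have hfg : ∀ g : C(s, ℝ), L g = R g := fun g => hclosure (huniv ▸ Set.mem_univ g)
  let g : C(s, ℝ) := (ContinuousMap.mk f hf).restrict s
  have h1 : cfc f a = cfcHom ha (g.comp ιa) := by
    rw [cfc_apply (R := ℝ) f a ha hf.continuousOn]
    congr 1
  have h2 : cfc f b = cfcHom hb (g.comp ιb) := by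
    rw [cfc_apply (R := ℝ) f b hb hf.continuousOn]
    congr 1
  rw [h1, h2]
  exact hfg g

lemma defect_q_comm {A : Type*} [Ring A] [Algebra ℂ A] [StarRing A] [StarModule ℂ A]
    (n : ℕ) (q : ℝ) (hq0 : 0 < q) (z : Fin n → A)
    (hcomm : ∀ i j : Fin n, i < j → z i * z j = ((Real.sqrt q : ℝ) : ℂ) • (z j * z i))
    (hcomm' : ∀ i j : Fin n, i < j →
      z i * star (z j) = (((Real.sqrt q)⁻¹ : ℝ) : ℂ) • (star (z j) * z i))
    (hrel : ∀ i : Fin n, star (z i) * z i - (q : ℂ) • (z i * star (z i)) =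
      ((1 - q : ℝ) : ℂ) • (1 - ∑ j ∈ Finset.Ioi i, z j * star (z j)))
    (i : Fin n) :
    (1 - ∑ j : Fin n, z j * star (z j)) * z i
      = (q : ℂ) • (z i * (1 - ∑ j : Fin n, z j * star (z j))) := by
  set c : ℂ := ((Real.sqrt q : ℝ) : ℂ) with hcdef
  have hc2 : c * c = (q : ℂ) := by
    rw [hcdef, ← Complex.ofReal_mul, Real.mul_self_sqrt hq0.le]
  have hc0 : c ≠ 0 := Complex.ofReal_ne_zero.mpr (ne_of_gt (Real.sqrt_pos.mpr hq0))
  have hcinv : (((Real.sqrt q)⁻¹ : ℝ) : ℂ) = c⁻¹ := Complex.ofReal_inv _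
  -- star (z j) * z i = c • (z i * star (z j)) for j ≠ i
  have hzstar : ∀ i j : Fin n, i ≠ j → star (z j) * z i = c • (z i * star (z j)) := by
    intro i j hij
    rcases lt_or_gt_of_ne hij with h | h
    · have hcj := hcomm' i j h
      rw [hcinv] at hcj
      rw [hcj, smul_smul, mul_inv_cancel₀ hc0, one_smul]
    · have hcj := congrArg star (hcomm' j i h)
      simp only [star_smul, star_mul, star_star, Complex.star_def, Complex.conj_ofReal] at hcj
      rw [hcinv] at hcj
      rw [hcj, smul_smul, mul_inv_cancel₀ hc0, one_smul]
  -- j > i : T j commutes with z i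
  have hFgt : ∀ j : Fin n, i < j →
      (z j * star (z j)) * z i = z i * (z j * star (z j)) := by
    intro j h
    have h1 : z j * z i = c⁻¹ • (z i * z j) := by
      rw [hcomm i j h, smul_smul, inv_mul_cancel₀ hc0, one_smul]
    calc (z j * star (z j)) * z i = z j * (star (z j) * z i) := by rw [mul_assoc]
      _ = z j * (c • (z i * star (z j))) := by rw [hzstar i j (ne_of_lt h)]
      _ = c • ((z j * z i) * star (z j)) := by rw [mul_smul_comm, mul_assoc]
      _ = c • ((c⁻¹ • (z i * z j)) * star (z j)) := by rw [h1]
      _ = (c * c⁻¹) • (z i * (z j * star (z j))) := by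
          rw [smul_mul_assoc, smul_smul, mul_assoc]
      _ = z i * (z j * star (z j)) := by rw [mul_inv_cancel₀ hc0, one_smul]
  -- j < i : T j q-commutes with z i
  have hFlt : ∀ j : Fin n, j < i →
      (z j * star (z j)) * z i = (q : ℂ) • (z i * (z j * star (z j))) := by
    intro j h
    have h1 : z j * z i = c • (z i * z j) := hcomm j i h
    calc (z j * star (z j)) * z i = z j * (star (z j) * z i) := by rw [mul_assoc]
      _ = z j * (c • (z i * star (z j))) := by rw [hzstar i j (ne_of_gt h)]
      _ = c • ((z j * z i) * star (z j)) := by rw [mul_smul_comm, mul_assoc]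
      _ = c • ((c • (z i * z j)) * star (z j)) := by rw [h1]
      _ = (c * c) • (z i * (z j * star (z j))) := by
          rw [smul_mul_assoc, smul_smul, mul_assoc]
      _ = (q : ℂ) • (z i * (z j * star (z j))) := by rw [hc2]
  -- the "defect" of each term
  set D : Fin n → A := fun j =>
    (z j * star (z j)) * z i - (q : ℂ) • (z i * (z j * star (z j))) with hD
  have hDlt : ∀ j : Fin n, j < i → D j = 0 := by
    intro j h
    rw [hD]
    simp only [hFlt j h, sub_self]
  have hDgt : ∀ j : Fin n, i < j → D j = (1 - (q:ℂ)) • (z i * (z j * star (z j))) := by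
    intro j h
    rw [hD]
    simp only [hFgt j h, sub_smul, one_smul]
  have hDi : D i = (1 - (q:ℂ)) • z i
      - ∑ j ∈ Finset.Ioi i, (1 - (q:ℂ)) • (z i * (z j * star (z j))) := by
    have h := congrArg (fun x => z i * x) (hrel i)
    simp only [mul_sub, mul_smul_comm, mul_one, Finset.mul_sum] at h
    rw [hD]
    have hl : z i * (star (z i) * z i) = (z i * star (z i)) * z i := by rw [mul_assoc]
    rw [hl] at h
    have hq' : ((1 - q : ℝ) : ℂ) = 1 - (q:ℂ) := by push_cast; ring
    rw [hq'] at h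
    simp only [h, smul_sub, Finset.smul_sum]
  -- sum of defects
  have hsum : ∑ j : Fin n, D j = (1 - (q:ℂ)) • z i := by
    have hsub : insert i (Finset.Ioi i) ⊆ Finset.univ := Finset.subset_univ _
    rw [← Finset.sum_subset hsub (fun j _ hj => ?_)]
    · rw [Finset.sum_insert (by simp), hDi,
        Finset.sum_congr rfl (fun j hj => hDgt j (Finset.mem_Ioi.mp hj))]
      abel
    · -- j ∉ insert i (Ioi i) means j < i
      have : j < i := by
        rcases lt_trichotomy j i with h | h | h
        · exact h
        · exact absurd (by simp [h]) hj
        · exact absurd (Finset.mem_insert_of_mem (Finset.mem_Ioi.mpr h)) hj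
      exact hDlt j this
  -- final expansion
  have expand : (1 - ∑ j : Fin n, z j * star (z j)) * z i
      - (q : ℂ) • (z i * (1 - ∑ j : Fin n, z j * star (z j)))
      = (1 - (q:ℂ)) • z i - ∑ j : Fin n, D j := by
    simp only [hD, sub_mul, one_mul, mul_sub, mul_one, smul_sub, Finset.sum_mul,
      Finset.mul_sum, sub_smul, one_smul, Finset.sum_sub_distrib, Finset.smul_sum]
    abel
  have : (1 - ∑ j : Fin n, z j * star (z j)) * z i
      - (q : ℂ) • (z i * (1 - ∑ j : Fin n, z j * star (z j))) = 0 := by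
    rw [expand, hsum, sub_self]
  exact sub_eq_zero.mp this

theorem sqrt_defect_q_commutes_with_generators
    {A : Type*} [CStarAlgebra A] [PartialOrder A] [StarOrderedRing A]
    (n : ℕ) (q : ℝ) (hq0 : 0 < q) (hq1 : q < 1) (z : Fin n → A)
    (hcomm : ∀ i j : Fin n, i < j → z i * z j = ((Real.sqrt q : ℝ) : ℂ) • (z j * z i))
    (hcomm' : ∀ i j : Fin n, i < j →
      z i * star (z j) = (((Real.sqrt q)⁻¹ : ℝ) : ℂ) • (star (z j) * z i))
    (hrel : ∀ i : Fin n, star (z i) * z i - (q : ℂ) • (z i * star (z i)) =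
      ((1 - q : ℝ) : ℂ) • (1 - ∑ j ∈ Finset.Ioi i, z j * star (z j))) :
    ∀ i : Fin n,
      CFC.sqrt (1 - ∑ j : Fin n, z j * star (z j)) * z i
        = ((Real.sqrt q : ℝ) : ℂ) • (z i * CFC.sqrt (1 - ∑ j : Fin n, z j * star (z j))) := by
  intro i
  set r : A := 1 - ∑ j : Fin n, z j * star (z j) with hrdef
  have hkey : r * z i = (q:ℂ) • (z i * r) := defect_q_comm n q hq0 z hcomm hcomm' hrel i
  have hr_sa : IsSelfAdjoint r := by
    rw [hrdef]
    rw [isSelfAdjoint_iff]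
    simp [star_sub, star_sum, star_mul, star_star, mul_assoc]
  by_cases hrpos : (0:A) ≤ r
  swap
  · have h0 : CFC.sqrt r = 0 := cfcₙ_apply_of_not_predicate r hrpos
    rw [h0]
    simp
  · have smul_nn : ∀ (t : ℝ), 0 ≤ t → ∀ x : A, 0 ≤ x → 0 ≤ t • x := by
      intro t ht x hx
      have h := star_left_conjugate_nonneg hx (Real.sqrt t • (1:A))
      simpa [star_smul, star_one, mul_smul_comm, smul_mul_assoc, smul_smul,
        Real.mul_self_sqrt ht] using h
    have hb_sa : IsSelfAdjoint (q • r) := (IsSelfAdjoint.all q).smul hr_sa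
    have hb_nn : (0:A) ≤ q • r := smul_nn q hq0.le r hrpos
    have hint : cfc Real.sqrt r * z i = z i * cfc Real.sqrt (q • r) := by
      refine cfc_intertwine hr_sa hb_sa ?_ Real.continuous_sqrt
      rw [hkey, mul_smul_comm, Complex.coe_smul]
    have hsq : ∀ (x : A), IsSelfAdjoint x → 0 ≤ x → cfc Real.sqrt x = CFC.sqrt x := by
      intro x hx hx0
      refine (CFC.sqrt_unique ?_ ?_).symm
      · rw [← cfc_mul Real.sqrt Real.sqrt x]
        have hcg : ∀ t ∈ spectrum ℝ x, Real.sqrt t * Real.sqrt t = (id : ℝ → ℝ) t := fun t ht =>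
          Real.mul_self_sqrt (spectrum_nonneg_of_nonneg hx0 ht)
        rw [cfc_congr hcg, cfc_id ℝ x]
      · exact cfc_nonneg fun t ht => Real.sqrt_nonneg t
    have hqr : CFC.sqrt (q • r) = Real.sqrt q • CFC.sqrt r := by
      refine CFC.sqrt_unique ?_ ?_
      · rw [smul_mul_assoc, mul_smul_comm, smul_smul,
          CFC.sqrt_mul_sqrt_self r hrpos, Real.mul_self_sqrt hq0.le]
      · exact smul_nn (Real.sqrt q) (Real.sqrt_nonneg q) _ (CFC.sqrt_nonneg _)
    calc CFC.sqrt r * z i = cfc Real.sqrt r * z i := by rw [hsq r hr_sa hrpos]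
      _ = z i * cfc Real.sqrt (q • r) := hint
      _ = z i * CFC.sqrt (q • r) := by rw [hsq _ hb_sa hb_nn]
      _ = z i * (Real.sqrt q • CFC.sqrt r) := by rw [hqr]
      _ = ((Real.sqrt q : ℝ):ℂ) • (z i * CFC.sqrt r) := by
          rw [mul_smul_comm, Complex.coe_smul]
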